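/- Let N be a positive real number, M ∈ [N, ∞] an extended real number, and γ > 0. Let X₁, X₂, … be i.i.d. real random variables that are 1-subgaussian with mean zero, and let μ̂ₙ = (1/n)·∑_{s=1}^n X_s. Then P(∃ n ∈ ℕ with N ≤ n ≤ M such that μ̂ₙ + γ ≤ 0) ≤ exp(−Nγ²/2). -/

import Mathlib

open MeasureTheory ProbabilityTheory Real
open scoped ENNReal

/-- `Z` is 1-subgaussian: `E[exp(λZ − λE[Z])] ≤ exp(λ²/2)` for all `λ ∈ ℝ`
(with the integrability of the moment generating function). -/
def IsOneSubgaussian {Ω : Type*} [MeasurableSpace Ω] (μ : Measure Ω) (Z : Ω → ℝ) : Prop :=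
  Integrable Z μ ∧ ∀ l : ℝ,
    Integrable (fun ω => Real.exp (l * Z ω - l * (∫ ω', Z ω' ∂μ))) μ ∧
    (∫ ω, Real.exp (l * Z ω - l * (∫ ω', Z ω' ∂μ)) ∂μ) ≤ Real.exp (l ^ 2 / 2)

section Ville
open Finset
open scoped NNReal

theorem ville_aux {Ω : Type*} {m0 : MeasurableSpace Ω} {μ : Measure Ω} [IsProbabilityMeasure μ]
    {𝒢 : Filtration ℕ m0} {f : ℕ → Ω → ℝ}
    (hsup : Supermartingale f 𝒢 μ) (hnonneg : 0 ≤ f) (c : ℝ≥0) (n : ℕ) :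
    c • μ {ω | (c : ℝ) ≤ (range (n + 1)).sup' nonempty_range_add_one fun k => f k ω} ≤
      ENNReal.ofReal (∫ ω, f 0 ω ∂μ) := by
  set τ : Ω → ℕ∞ := fun ω => (hittingBtwn f {y : ℝ | (c : ℝ) ≤ y} 0 n ω : ℕ) with hτdef
  have hτ : IsStoppingTime 𝒢 τ := hsup.stronglyAdapted.adapted.isStoppingTime_hittingBtwn measurableSet_Ici
  have hτle : ∀ ω, τ ω ≤ n := fun ω => by
    simp only [hτdef]; exact_mod_cast (hittingBtwn_le (u := f) (s := {y : ℝ | (c : ℝ) ≤ y}) (n := 0) (m := n) ω)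
  have hSVint : Integrable (stoppedValue f τ) μ := by
    have := (hsup.neg.integrable_stoppedValue hτ hτle)
    have h2 : stoppedValue f τ = -(stoppedValue (-f) τ) := by
      funext ω; simp [stoppedValue]
    rw [h2]; exact this.neg
  have hmeasset : MeasurableSet {ω | (c : ℝ) ≤ (range (n + 1)).sup' nonempty_range_add_one
      fun k => f k ω} :=
    measurableSet_le measurable_const
      (Finset.measurable_range_sup'' fun k _ =>
        (hsup.stronglyMeasurable k).measurable.le (𝒢.le k))
  have hge : ∀ ω, ((c : ℝ) ≤ (range (n + 1)).sup' nonempty_range_add_one fun k => f k ω) →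
      (c : ℝ) ≤ stoppedValue f τ ω := by
    intro ω hω
    simp_rw [le_sup'_iff, mem_range, Nat.lt_succ_iff] at hω
    refine stoppedValue_hittingBtwn_mem ?_
    have hn : Set.Icc 0 n = {k | k ≤ n} := by ext x; simp
    simp only [Set.mem_setOf_eq, hn]
    exact let ⟨j, hj₁, hj₂⟩ := hω; ⟨j, hj₁, hj₂⟩
  have h1 : c • μ {ω | (c : ℝ) ≤ (range (n + 1)).sup' nonempty_range_add_one fun k => f k ω} ≤
      ENNReal.ofReal (∫ ω in {ω | (c : ℝ) ≤ (range (n + 1)).sup' nonempty_range_add_one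
        fun k => f k ω}, stoppedValue f τ ω ∂μ) := by
    have h := setIntegral_ge_of_const_le hmeasset (measure_ne_top _ _) hge hSVint.integrableOn
    rw [ENNReal.le_ofReal_iff_toReal_le, ENNReal.toReal_smul]
    · calc _ = μ.real _ • (c : ℝ) := by simp [Measure.real, NNReal.smul_def, mul_comm]
        _ ≤ _ := h
    · exact ENNReal.mul_ne_top (by simp) (measure_ne_top _ _)
    · exact le_trans (smul_nonneg measureReal_nonneg c.coe_nonneg) h
  refine h1.trans (ENNReal.ofReal_le_ofReal ?_)
  have h2 : ∫ ω in {ω | (c : ℝ) ≤ (range (n + 1)).sup' nonempty_range_add_one fun k => f k ω},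
      stoppedValue f τ ω ∂μ ≤ ∫ ω, stoppedValue f τ ω ∂μ := by
    refine setIntegral_le_integral hSVint (Filter.Eventually.of_forall fun ω => ?_)
    exact hnonneg _ ω
  refine h2.trans ?_
  have h3 := hsup.neg.expected_stoppedValue_mono (isStoppingTime_const 𝒢 0) hτ
    (fun ω => WithTop.coe_le_coe.2 (Nat.zero_le _)) hτle
  rw [stoppedValue_const] at h3
  have h4 : stoppedValue (-f) τ = -(stoppedValue f τ) := by funext ω; simp [stoppedValue]
  rw [h4] at h3
  simp only [Pi.neg_apply, integral_neg] at h3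
  linarith

end Ville

/-- Maximal inequality: if `X₁, X₂, …` are i.i.d. 1-subgaussian with mean zero,
`μ̂ₙ` their empirical mean, `N > 0` a real, `M ∈ [N, ∞]` an extended real and `γ > 0`, then
`P(∃ n ∈ ℕ, N ≤ n ≤ M, μ̂ₙ + γ ≤ 0) ≤ exp(−Nγ²/2)`. -/
theorem stmt0 {Ω : Type*} [MeasurableSpace Ω] (μ : Measure Ω) [IsProbabilityMeasure μ]
    (X : ℕ → Ω → ℝ) (hmeas : ∀ i, Measurable (X i))
    (hindep : iIndepFun X μ)
    (hident : ∀ i, IdentDistrib (X i) (X 0) μ μ)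
    (hsub : ∀ i, IsOneSubgaussian μ (X i))
    (hmean : ∀ i, (∫ ω, X i ω ∂μ) = 0)
    (N : ℝ) (hN : 0 < N) (M : ℝ≥0∞) (hM : ENNReal.ofReal N ≤ M)
    (γ : ℝ) (hγ : 0 < γ) :
    μ {ω | ∃ n : ℕ, N ≤ (n : ℝ) ∧ (n : ℝ≥0∞) ≤ M ∧
        (∑ s ∈ Finset.range n, X s ω) / n + γ ≤ 0} ≤
      ENNReal.ofReal (Real.exp (-(N * γ ^ 2) / 2)) := by
  classical
  set S : ℕ → Ω → ℝ := fun n ω => ∑ s ∈ Finset.range n, X s ω with hSdef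
  set f : ℕ → Ω → ℝ := fun n ω => rexp (-γ * S n ω - n * (γ ^ 2 / 2)) with hfdef
  set T : (n : ℕ) → Ω → ((i : Finset.range n) → ℝ) := fun n ω i => X i ω with hTdef
  have hTmeas : ∀ n, Measurable (T n) := fun n => measurable_pi_lambda _ fun i => hmeas i
  -- the filtration
  set 𝒢 : Filtration ℕ ‹MeasurableSpace Ω› :=
    { seq := fun n => MeasurableSpace.comap (T n) inferInstance
      mono' := by
        intro n m hnm
        have hR : Measurable (fun (v : (i : Finset.range m) → ℝ) (i : Finset.range n) =>
            v ⟨(i : ℕ), Finset.mem_range.2 (lt_of_lt_of_le (Finset.mem_range.1 i.2) hnm)⟩) :=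
          measurable_pi_lambda _ fun i => measurable_pi_apply _
        have hcomp : T n = (fun (v : (i : Finset.range m) → ℝ) (i : Finset.range n) =>
            v ⟨(i : ℕ), Finset.mem_range.2 (lt_of_lt_of_le (Finset.mem_range.1 i.2) hnm)⟩) ∘
            T m := rfl
        show MeasurableSpace.comap (T n) inferInstance ≤ MeasurableSpace.comap (T m) inferInstance
        rw [hcomp, ← MeasurableSpace.comap_comp]
        exact le_trans (MeasurableSpace.comap_mono hR.comap_le) le_rfl
      le' := fun n => (hTmeas n).comap_le } with h𝒢def
  -- f n as a function of T n
  set F : (n : ℕ) → ((i : Finset.range n) → ℝ) → ℝ :=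
    fun n v => rexp (-γ * (∑ i ∈ (Finset.range n).attach, v i) - n * (γ ^ 2 / 2)) with hFdef
  have hFmeas : ∀ n, Measurable (F n) := by
    intro n
    apply Real.measurable_exp.comp
    apply Measurable.sub _ measurable_const
    exact (Finset.measurable_sum _ fun i _ => measurable_pi_apply i).const_mul _
  have hfF : ∀ n, f n = F n ∘ T n := by
    intro n
    funext ω
    simp only [hfdef, hFdef, Function.comp_apply, hTdef, hSdef]
    rw [Finset.sum_attach (Finset.range n) (fun s => X s ω)]
  have hadp : StronglyAdapted 𝒢 f := by
    intro n
    rw [hfF n]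
    exact ((hFmeas n).comp (Measurable.of_comap_le le_rfl)).stronglyMeasurable
  -- the one-step factor
  set g : ℕ → Ω → ℝ := fun n ω => rexp (-γ * X n ω - γ ^ 2 / 2) with hgdef
  have hfg : ∀ n ω, f (n + 1) ω = f n ω * g n ω := by
    intro n ω
    simp only [hfdef, hgdef, hSdef, ← Real.exp_add]
    congr 1
    rw [Finset.sum_range_succ]
    push_cast
    ring
  -- subgaussian facts
  have hXsub : ∀ n, Integrable (fun ω => rexp (-γ * X n ω)) μ ∧
      (∫ ω, rexp (-γ * X n ω) ∂μ) ≤ rexp (γ ^ 2 / 2) := by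
    intro n
    have h := (hsub n).2 (-γ)
    rw [hmean n] at h
    simp only [mul_zero, sub_zero] at h
    have hpow : (-γ : ℝ) ^ 2 = γ ^ 2 := by ring
    rw [hpow] at h
    exact h
  have hgeq : ∀ n, g n = fun ω => rexp (-γ * X n ω) / rexp (γ ^ 2 / 2) := by
    intro n; funext ω; rw [hgdef]; rw [← Real.exp_sub]
  have hgint : ∀ n, Integrable (g n) μ := by
    intro n; rw [hgeq n]; exact (hXsub n).1.div_const _
  have hgle : ∀ n, (∫ ω, g n ω ∂μ) ≤ 1 := by
    intro n
    rw [hgeq n]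
    rw [integral_div]
    rw [div_le_one (Real.exp_pos _)]
    exact (hXsub n).2
  -- independence of 𝒢 n-functions from g n
  have hindpair : ∀ n (φ : ((i : Finset.range n) → ℝ) → ℝ), Measurable φ →
      IndepFun (φ ∘ T n) (g n) μ := by
    intro n φ hφ
    have base := hindep.indepFun_finset (Finset.range n) {n}
      (by simp only [Finset.disjoint_singleton_right, Finset.mem_range]; omega) hmeas
    have hψ : Measurable (fun v : ((i : ({n} : Finset ℕ)) → ℝ) =>
        rexp (-γ * v ⟨n, Finset.mem_singleton_self n⟩ - γ ^ 2 / 2)) := by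
      apply Real.measurable_exp.comp
      exact ((measurable_pi_apply _).const_mul _).sub measurable_const
    have := base.comp hφ hψ
    exact this
  -- integrability of f n
  have hfint : ∀ n, Integrable (f n) μ := by
    intro n
    induction n with
    | zero =>
      have : f 0 = fun _ => (1 : ℝ) := by
        funext ω; simp [hfdef, hSdef]
      rw [this]; exact integrable_const 1
    | succ n ih =>
      have heq : f (n + 1) = f n * g n := funext fun ω => hfg n ω
      rw [heq]
      have hind : IndepFun (f n) (g n) μ := by
        rw [hfF n]; exact hindpair n (F n) (hFmeas n)
      exact hind.integrable_mul ih (hgint n)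
  -- nonnegativity
  have hfnonneg : (0 : ℕ → Ω → ℝ) ≤ f := fun n ω => (Real.exp_pos _).le
  -- supermartingale property
  have hsup : Supermartingale f 𝒢 μ := by
    refine supermartingale_of_setIntegral_succ_le hadp hfint ?_
    intro n s hs
    have hsmem : MeasurableSet s := 𝒢.le n s hs
    obtain ⟨t, ht, hst⟩ := hs
    have hindic : Set.indicator s (f n) = (Set.indicator t (F n)) ∘ T n := by
      funext ω
      by_cases hω : ω ∈ s
      · have hωt : T n ω ∈ t := by rw [← hst] at hω; exact hω
        rw [Set.indicator_of_mem hω, Function.comp_apply, Set.indicator_of_mem hωt, hfF n]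
        rfl
      · have hωt : T n ω ∉ t := by rw [← hst] at hω; exact hω
        rw [Set.indicator_of_notMem hω, Function.comp_apply, Set.indicator_of_notMem hωt]
    have hind : IndepFun (Set.indicator s (f n)) (g n) μ := by
      rw [hindic]; exact hindpair n _ ((hFmeas n).indicator ht)
    have hintind : Integrable (Set.indicator s (f n)) μ := (hfint n).indicator hsmem
    have hstep : ∫ ω in s, f (n + 1) ω ∂μ =
        (∫ ω, Set.indicator s (f n) ω ∂μ) * ∫ ω, g n ω ∂μ := by
      rw [← integral_indicator hsmem]
      have : Set.indicator s (f (n + 1)) = Set.indicator s (f n) * g n := by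
        funext ω
        by_cases hω : ω ∈ s
        · simp [Set.indicator_of_mem hω, hfg n ω]
        · simp [Set.indicator_of_notMem hω]
      rw [this]
      exact hind.integral_mul_eq_mul_integral hintind.aestronglyMeasurable (hgint n).aestronglyMeasurable
    rw [hstep, ← integral_indicator hsmem]
    have hnn : 0 ≤ ∫ ω, Set.indicator s (f n) ω ∂μ :=
      integral_nonneg fun ω => Set.indicator_nonneg (fun x _ => hfnonneg n x) ω
    calc (∫ ω, Set.indicator s (f n) ω ∂μ) * ∫ ω, g n ω ∂μ
        ≤ (∫ ω, Set.indicator s (f n) ω ∂μ) * 1 := by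
          exact mul_le_mul_of_nonneg_left (hgle n) hnn
      _ = ∫ ω, Set.indicator s (f n) ω ∂μ := mul_one _
  -- apply Ville's inequality
  set c : NNReal := (rexp (N * γ ^ 2 / 2)).toNNReal with hcdef
  have hccoe : (c : ℝ) = rexp (N * γ ^ 2 / 2) := Real.coe_toNNReal _ (Real.exp_pos _).le
  have hf0 : (∫ ω, f 0 ω ∂μ) = 1 := by
    have : f 0 = fun _ => (1 : ℝ) := by funext ω; simp [hfdef, hSdef]
    rw [this]; simp
  set A : ℕ → Set Ω := fun n =>
    {ω | (c : ℝ) ≤ (Finset.range (n + 1)).sup' Finset.nonempty_range_add_one fun k => f k ω}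
    with hAdef
  have hAmono : Monotone A := by
    intro n m hnm ω hω
    simp only [hAdef, Set.mem_setOf_eq] at hω ⊢
    exact le_trans hω (Finset.sup'_mono (fun k => f k ω)
      (Finset.range_subset_range.2 (Nat.succ_le_succ hnm)) Finset.nonempty_range_add_one)
  have hville : ∀ n, μ (A n) ≤ ENNReal.ofReal (rexp (-(N * γ ^ 2) / 2)) := by
    intro n
    have h := ville_aux hsup hfnonneg c n
    rw [hf0] at h
    simp only [ENNReal.ofReal_one, smul_eq_mul] at h
    have hc : μ (A n) ≤ (c : ℝ≥0∞)⁻¹ := by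
      rw [ENNReal.le_inv_iff_mul_le, mul_comm]
      exact h
    refine hc.trans ?_
    have h1 : (c : ℝ≥0∞) = ENNReal.ofReal (rexp (N * γ ^ 2 / 2)) := rfl
    rw [h1, ← ENNReal.ofReal_inv_of_pos (Real.exp_pos _), ← Real.exp_neg]
    apply le_of_eq
    congr 1
    ring
  -- event inclusion
  have hincl : {ω | ∃ n : ℕ, N ≤ (n : ℝ) ∧ (n : ℝ≥0∞) ≤ M ∧
      (∑ s ∈ Finset.range n, X s ω) / n + γ ≤ 0} ⊆ ⋃ n, A n := by
    rintro ω ⟨n, hn, -, hne⟩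
    have hnpos : (0 : ℝ) < n := lt_of_lt_of_le hN hn
    have hdiv : (∑ s ∈ Finset.range n, X s ω) / n ≤ -γ := by linarith
    have hSle : S n ω ≤ -γ * n := by
      have := (div_le_iff₀ hnpos).1 hdiv
      simpa [hSdef] using this
    have hfc : (c : ℝ) ≤ f n ω := by
      rw [hccoe, hfdef]
      apply Real.exp_le_exp.2
      have h1 : γ * S n ω ≤ γ * (-γ * n) := mul_le_mul_of_nonneg_left hSle hγ.le
      have h2 : N * (γ ^ 2 / 2) ≤ n * (γ ^ 2 / 2) :=
        mul_le_mul_of_nonneg_right hn (by positivity)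
      nlinarith
    refine Set.mem_iUnion.2 ⟨n, ?_⟩
    show (c : ℝ) ≤ (Finset.range (n + 1)).sup' Finset.nonempty_range_add_one fun k => f k ω
    exact le_trans hfc (Finset.le_sup' (fun k => f k ω) (Finset.self_mem_range_succ n))
  refine le_trans (measure_mono hincl) ?_
  rw [hAmono.directed_le.measure_iUnion]
  exact iSup_le hville
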